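/- Let X, Y, Z be finite sets with (X,Y) ~ P and Z independent of (X,Y). Let Q(·|x) be an arbitrary nonnegative measure on Y for each x ∈ X. If a set-valued predictor Γ: Z × X → 2^Y satisfies P(Y ∉ Γ(Z,X)) ≤ α, then for any β > 0: P(P(Y|X) ≤ β·Q(Y|X)) ≤ α + β·E_{X,Z}[Q(Γ(Z,X)|X)], where Q(S|x) = Σ_{y∈S} Q(y|x). -/

import Mathlib

/-- Generalized information-spectrum bound with an arbitrary nonnegative
measure `Q(·|x)` on `Y`: if `(X,Y) ~ P`, `Z ~ R` independent of `(X,Y)`, and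
`P(Y ∉ Γ(Z,X)) ≤ α`, then for any `β > 0`,
`P(P(Y|X) ≤ β·Q(Y|X)) ≤ α + β · E_{X,Z}[Q(Γ(Z,X)|X)]`.
The event `P(Y|X) ≤ β·Q(Y|X)` is expressed as `P x y ≤ β · Q x y · P(x)`, and
`Q(S|x) = ∑_{y ∈ S} Q x y`. -/
theorem confidence_efficiency_tradeoff_general_measure
    {X Y Z : Type*} [Fintype X] [Fintype Y] [Fintype Z] [DecidableEq Y]
    (P : X → Y → ℝ) (hPnonneg : ∀ x y, 0 ≤ P x y)
    (hPsum : ∑ x, ∑ y, P x y = 1)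
    (Q : X → Y → ℝ) (hQnonneg : ∀ x y, 0 ≤ Q x y)
    (R : Z → ℝ) (hRnonneg : ∀ z, 0 ≤ R z) (hRsum : ∑ z, R z = 1)
    (Γ : Z → X → Finset Y)
    (α β : ℝ) (hβ0 : 0 < β)
    (herr : ∑ z, ∑ x, ∑ y, R z * P x y * (if y ∈ Γ z x then 0 else 1) ≤ α) :
    ∑ x, ∑ y, (if P x y ≤ β * Q x y * (∑ y', P x y') then P x y else 0) ≤
      α + β * ∑ z, ∑ x, R z * (∑ y, P x y) * (∑ y ∈ Γ z x, Q x y) := by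
  have hterm : ∀ z x y, R z * (if P x y ≤ β * Q x y * (∑ y', P x y') then P x y else 0) ≤
      R z * P x y * (if y ∈ Γ z x then 0 else 1) +
      (if y ∈ Γ z x then R z * (β * Q x y * (∑ y', P x y')) else 0) := by
    intro z x y
    have hS : (0:ℝ) ≤ ∑ y', P x y' := Finset.sum_nonneg fun y' _ => hPnonneg x y'
    have h1 : (0:ℝ) ≤ R z * (β * Q x y * ∑ y', P x y') :=
      mul_nonneg (hRnonneg z) (mul_nonneg (mul_nonneg hβ0.le (hQnonneg x y)) hS)
    have h0 : (0:ℝ) ≤ R z * P x y := mul_nonneg (hRnonneg z) (hPnonneg x y)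
    by_cases hy : y ∈ Γ z x <;> by_cases hc : P x y ≤ β * Q x y * ∑ y', P x y' <;>
      simp [hy, hc]
    · exact mul_le_mul_of_nonneg_left hc (hRnonneg z)
    · exact h1
    · exact h0
  have h2 : ∀ z x, ∑ y, (if y ∈ Γ z x then R z * (β * Q x y * (∑ y', P x y')) else 0) =
      β * (R z * (∑ y, P x y) * (∑ y ∈ Γ z x, Q x y)) := by
    intro z x
    rw [Finset.sum_ite_mem, Finset.univ_inter, Finset.mul_sum, Finset.mul_sum]
    exact Finset.sum_congr rfl fun y _ => by ring
  calc ∑ x, ∑ y, (if P x y ≤ β * Q x y * (∑ y', P x y') then P x y else 0)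
      = ∑ z, R z * (∑ x, ∑ y, (if P x y ≤ β * Q x y * (∑ y', P x y') then P x y else 0)) := by
        rw [← Finset.sum_mul, hRsum, one_mul]
    _ ≤ ∑ z, ((∑ x, ∑ y, R z * P x y * (if y ∈ Γ z x then 0 else 1)) +
          β * ∑ x, R z * (∑ y, P x y) * (∑ y ∈ Γ z x, Q x y)) := by
        refine Finset.sum_le_sum fun z _ => ?_
        calc R z * (∑ x, ∑ y, (if P x y ≤ β * Q x y * (∑ y', P x y') then P x y else 0))
            = ∑ x, ∑ y, R z * (if P x y ≤ β * Q x y * (∑ y', P x y') then P x y else 0) := by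
              simp [Finset.mul_sum]
          _ ≤ ∑ x, ∑ y, (R z * P x y * (if y ∈ Γ z x then 0 else 1) +
                (if y ∈ Γ z x then R z * (β * Q x y * (∑ y', P x y')) else 0)) :=
              Finset.sum_le_sum fun x _ => Finset.sum_le_sum fun y _ => hterm z x y
          _ = (∑ x, ∑ y, R z * P x y * (if y ∈ Γ z x then 0 else 1)) +
                β * ∑ x, R z * (∑ y, P x y) * (∑ y ∈ Γ z x, Q x y) := by
              simp only [Finset.sum_add_distrib, h2, ← Finset.mul_sum]
    _ = (∑ z, ∑ x, ∑ y, R z * P x y * (if y ∈ Γ z x then 0 else 1)) +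
          β * ∑ z, ∑ x, R z * (∑ y, P x y) * (∑ y ∈ Γ z x, Q x y) := by
        rw [Finset.sum_add_distrib, ← Finset.mul_sum]
    _ ≤ α + β * ∑ z, ∑ x, R z * (∑ y, P x y) * (∑ y ∈ Γ z x, Q x y) :=
        add_le_add herr le_rfl
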